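/- (Theorem 1(b)) Let n ≥ 3 and let r_1, …, r_n > 0. If α_1, …, α_n is a connecting cycle with distinct consecutive vertices (l_j ≠ 0 for all j) at which all n partial derivatives ∂L/∂α_j vanish, then there exists σ ≥ 0 such that for every j the distance from the origin O to the line through p_j and p_{j+1} equals σ; i.e., every side (or its straight-line continuation) is tangent to one common circle of radius σ centered at O. -/

import Mathlib

open Real

/-- The point with polar radius `ρ` and polar angle `θ` in the Euclidean plane. -/
noncomputable def pt (ρ θ : ℝ) : EuclideanSpace ℝ (Fin 2) :=
  WithLp.toLp 2 ![ρ * Real.cos θ, ρ * Real.sin θ]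

/-- The `i`-th vertex `p_i = (r_i cos α_i, r_i sin α_i)` of the connecting cycle. -/
noncomputable def vert {n : ℕ} [NeZero n] (r α : Fin n → ℝ) (i : Fin n) :
    EuclideanSpace ℝ (Fin 2) :=
  pt (r i) (α i)

/-- The perimeter `L = Σ_j |p_j − p_{j+1}|` of the connecting cycle (indices mod `n`). -/
noncomputable def perimE {n : ℕ} [NeZero n] (r α : Fin n → ℝ) : ℝ :=
  ∑ j, dist (vert r α j) (vert r α (j + 1))

/-! ### Auxiliary lemmas -/

lemma pt_zero (ρ θ : ℝ) : pt ρ θ 0 = ρ * Real.cos θ := rfl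
lemma pt_one (ρ θ : ℝ) : pt ρ θ 1 = ρ * Real.sin θ := rfl

lemma vert_def {n : ℕ} [NeZero n] (r α : Fin n → ℝ) (i : Fin n) :
    vert r α i = pt (r i) (α i) := rfl

lemma dist_pt (ρ₁ θ₁ ρ₂ θ₂ : ℝ) :
    dist (pt ρ₁ θ₁) (pt ρ₂ θ₂)
      = Real.sqrt (ρ₁^2 + ρ₂^2 - 2*ρ₁*ρ₂*Real.cos (θ₁ - θ₂)) := by
  rw [EuclideanSpace.dist_eq, Fin.sum_univ_two, pt_zero, pt_one, pt_zero, pt_one]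
  simp only [Real.dist_eq, sq_abs]
  congr 1
  rw [Real.cos_sub]
  have h1 := Real.sin_sq_add_cos_sq θ₁
  have h2 := Real.sin_sq_add_cos_sq θ₂
  nlinarith [h1, h2]

lemma hasDerivAt_dist_pt (ρ₁ ρ₂ θ₁ θ₂ : ℝ) (h : pt ρ₁ θ₁ ≠ pt ρ₂ θ₂) :
    HasDerivAt (fun t => dist (pt ρ₁ t) (pt ρ₂ θ₂))
      (ρ₁ * ρ₂ * Real.sin (θ₁ - θ₂) / dist (pt ρ₁ θ₁) (pt ρ₂ θ₂)) θ₁ := by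
  have hd : (0:ℝ) < dist (pt ρ₁ θ₁) (pt ρ₂ θ₂) := dist_pos.2 h
  set g : ℝ → ℝ := fun t => ρ₁^2 + ρ₂^2 - 2*ρ₁*ρ₂*Real.cos (t - θ₂) with hgdef
  have hg0 : 0 < g θ₁ := by
    have := hd
    rw [dist_pt] at this
    exact Real.sqrt_pos.1 this
  have hg : HasDerivAt g (2*ρ₁*ρ₂*Real.sin (θ₁ - θ₂)) θ₁ := by
    have h1 : HasDerivAt (fun t : ℝ => t - θ₂) 1 θ₁ := (hasDerivAt_id θ₁).sub_const θ₂
    have hcos : HasDerivAt (fun t => Real.cos (t - θ₂)) (-Real.sin (θ₁-θ₂)) θ₁ := by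
      simpa [Function.comp_def] using (Real.hasDerivAt_cos (θ₁-θ₂)).comp θ₁ h1
    have := (hcos.const_mul (2*ρ₁*ρ₂)).const_sub (ρ₁^2 + ρ₂^2)
    simpa [hgdef, mul_comm, mul_assoc, mul_left_comm, sub_eq_add_neg] using this
  have hsq : HasDerivAt (fun t => Real.sqrt (g t))
      ((1 / (2 * Real.sqrt (g θ₁))) * (2*ρ₁*ρ₂*Real.sin (θ₁ - θ₂))) θ₁ :=
    (Real.hasDerivAt_sqrt hg0.ne').comp θ₁ hg
  have heq : (fun t => dist (pt ρ₁ t) (pt ρ₂ θ₂)) = fun t => Real.sqrt (g t) := by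
    funext t; rw [dist_pt]
  rw [heq, dist_pt]
  convert hsq using 1
  have hs : Real.sqrt (g θ₁) ≠ 0 := Real.sqrt_ne_zero'.2 hg0
  simp only [hgdef] at hs ⊢
  field_simp

lemma dist_coord (x y : EuclideanSpace ℝ (Fin 2)) :
    dist x y = Real.sqrt ((x 0 - y 0)^2 + (x 1 - y 1)^2) := by
  rw [EuclideanSpace.dist_eq, Fin.sum_univ_two]
  simp [Real.dist_eq, sq_abs]

lemma infDist_line (p q : EuclideanSpace ℝ (Fin 2)) (h : p ≠ q) :
    Metric.infDist (0 : EuclideanSpace ℝ (Fin 2))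
      (affineSpan ℝ {p, q} : Set (EuclideanSpace ℝ (Fin 2)))
      = |p 0 * q 1 - q 0 * p 1| / dist p q := by
  set v0 : ℝ := q 0 - p 0 with hv0
  set v1 : ℝ := q 1 - p 1 with hv1
  set V : ℝ := v0^2 + v1^2 with hV
  have hdpq : dist p q = Real.sqrt V := by
    rw [dist_coord]; congr 1; rw [hV, hv0, hv1]; ring
  have hVpos : 0 < V := by
    have := dist_pos.2 h
    rw [hdpq] at this
    exact Real.sqrt_pos.1 this
  set cross : ℝ := p 0 * q 1 - q 0 * p 1 with hcross
  have hcross' : cross = p 0 * v1 - p 1 * v0 := by rw [hcross, hv0, hv1]; ring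
  rw [hdpq]
  have key : ∀ t : ℝ, Real.sqrt ((t * v0 + p 0)^2 + (t * v1 + p 1)^2)
      ≥ |cross| / Real.sqrt V := by
    intro t
    have h1 : cross^2 / V ≤ (t * v0 + p 0)^2 + (t * v1 + p 1)^2 := by
      rw [div_le_iff₀ hVpos, hcross']
      nlinarith [sq_nonneg ((t*v0+p 0)*v0 + (t*v1+p 1)*v1)]
    calc |cross| / Real.sqrt V = Real.sqrt (cross^2 / V) := by
          rw [Real.sqrt_div (sq_nonneg _), Real.sqrt_sq_eq_abs]
      _ ≤ _ := Real.sqrt_le_sqrt h1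
  apply le_antisymm
  · set t : ℝ := -((p 0 * v0 + p 1 * v1) / V) with htdef
    set y : EuclideanSpace ℝ (Fin 2) := t • (q - p) + p with hy
    have hymem : y ∈ (affineSpan ℝ {p, q} : Set (EuclideanSpace ℝ (Fin 2))) := by
      have := AffineMap.lineMap_mem_affineSpan_pair t p q
      simpa [AffineMap.lineMap_apply, hy, vsub_eq_sub, vadd_eq_add, add_comm] using this
    refine le_trans (Metric.infDist_le_dist_of_mem hymem) ?_
    have hy0 : y 0 = t * v0 + p 0 := by
      simp [hy, hv0, PiLp.add_apply, PiLp.smul_apply, PiLp.sub_apply, smul_eq_mul]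
      try ring
    have hy1 : y 1 = t * v1 + p 1 := by
      simp [hy, hv1, PiLp.add_apply, PiLp.smul_apply, PiLp.sub_apply, smul_eq_mul]
      try ring
    rw [dist_comm, dist_coord]
    have hz0 : (0 : EuclideanSpace ℝ (Fin 2)) 0 = 0 := rfl
    have hz1 : (0 : EuclideanSpace ℝ (Fin 2)) 1 = 0 := rfl
    rw [hz0, hz1, sub_zero, sub_zero]
    have hval : y 0 ^ 2 + y 1 ^ 2 = cross^2 / V := by
      rw [hy0, hy1, htdef, hcross']
      field_simp
      ring
    rw [hval, Real.sqrt_div (sq_nonneg _), Real.sqrt_sq_eq_abs]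
  · rw [← not_lt]
    intro hlt
    have hnon : (affineSpan ℝ {p, q} : Set (EuclideanSpace ℝ (Fin 2))).Nonempty :=
      ⟨p, left_mem_affineSpan_pair ℝ p q⟩
    obtain ⟨y, hy, hdy⟩ := (Metric.infDist_lt_iff hnon).1 hlt
    have hy' : (y - p) +ᵥ p ∈ affineSpan ℝ {p, q} := by
      simpa [vadd_eq_add, sub_add_cancel] using hy
    obtain ⟨t, ht⟩ := vadd_left_mem_affineSpan_pair.1 hy'
    rw [vsub_eq_sub] at ht
    have hy0 : y 0 = t * v0 + p 0 := by
      have := congrArg (· 0) ht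
      simp only [PiLp.smul_apply, PiLp.sub_apply, smul_eq_mul] at this
      rw [hv0]; linarith
    have hy1 : y 1 = t * v1 + p 1 := by
      have := congrArg (· 1) ht
      simp only [PiLp.smul_apply, PiLp.sub_apply, smul_eq_mul] at this
      rw [hv1]; linarith
    have hd : dist (0 : EuclideanSpace ℝ (Fin 2)) y
        = Real.sqrt ((t * v0 + p 0)^2 + (t * v1 + p 1)^2) := by
      rw [dist_coord]
      have hz0 : (0 : EuclideanSpace ℝ (Fin 2)) 0 = 0 := rfl
      have hz1 : (0 : EuclideanSpace ℝ (Fin 2)) 1 = 0 := rfl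
      rw [hz0, hz1, hy0, hy1]
      congr 1; ring
    have := key t
    rw [hd] at hdy
    linarith

section finfacts
variable {n : ℕ} [NeZero n]

lemma fin_one_ne_zero' (hn : 3 ≤ n) : (1 : Fin n) ≠ 0 := by
  intro h
  have h2 := congrArg Fin.val h
  have h3 : (1 : Fin n).val = 1 := by
    rw [Fin.val_one']
    exact Nat.mod_eq_of_lt (by omega)
  rw [h3] at h2
  simp at h2

lemma fin_add_one_ne (hn : 3 ≤ n) (j : Fin n) : j + 1 ≠ j := by
  intro h
  apply fin_one_ne_zero' hn
  calc (1 : Fin n) = j + 1 - j := by rw [add_sub_cancel_left]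
    _ = j - j := by rw [h]
    _ = 0 := sub_self j

lemma fin_sub_one_ne (hn : 3 ≤ n) (j : Fin n) : j - 1 ≠ j := by
  intro h
  have h2 : j = j + 1 := by
    conv_lhs => rw [← sub_add_cancel j 1, h]
  exact fin_add_one_ne hn j h2.symm

lemma fin_sub_add_one (j : Fin n) : (j - 1) + 1 = j := sub_add_cancel j 1

end finfacts

/-- The signed distance from the origin to the `j`-th side line. -/
noncomputable def sgd {n : ℕ} [NeZero n] (r α : Fin n → ℝ) (j : Fin n) : ℝ :=
  r j * r (j+1) * Real.sin (α (j+1) - α j) / dist (vert r α j) (vert r α (j+1))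

lemma hasDerivAt_perim_update {n : ℕ} [NeZero n] (hn : 3 ≤ n) (r : Fin n → ℝ)
    (α : Fin n → ℝ) (hne : ∀ j, vert r α j ≠ vert r α (j + 1)) (j : Fin n) :
    HasDerivAt (fun t => perimE r (Function.update α j t))
      (sgd r α (j-1) - sgd r α j) (α j) := by
  have hj1 : j + 1 ≠ j := fin_add_one_ne hn j
  have hjm : j - 1 ≠ j := fin_sub_one_ne hn j
  have hterm : ∀ k : Fin n,
      HasDerivAt (fun t => dist (vert r (Function.update α j t) k)
          (vert r (Function.update α j t) (k+1)))
        ((if k = j - 1 then sgd r α (j-1) else 0) + (if k = j then -(sgd r α j) else 0))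
        (α j) := by
    intro k
    by_cases hk : k = j
    · subst hk
      have hfun : (fun t => dist (vert r (Function.update α k t) k)
            (vert r (Function.update α k t) (k+1)))
          = fun t => dist (pt (r k) t) (pt (r (k+1)) (α (k+1))) := by
        funext t
        rw [vert_def, vert_def, Function.update_self, Function.update_of_ne hj1]
      rw [hfun, if_neg (Ne.symm hjm), if_pos rfl, zero_add]
      have h := hasDerivAt_dist_pt (r k) (r (k+1)) (α k) (α (k+1)) (hne k)
      convert h using 1
      rw [sgd, vert_def, vert_def]
      rw [show α k - α (k+1) = -(α (k+1) - α k) by ring, Real.sin_neg]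
      ring
    · by_cases hkm : k = j - 1
      · subst hkm
        have hk1 : (j - 1) + 1 = j := fin_sub_add_one j
        have hfun : (fun t => dist (vert r (Function.update α j t) (j-1))
              (vert r (Function.update α j t) ((j-1)+1)))
            = fun t => dist (pt (r j) t) (pt (r (j-1)) (α (j-1))) := by
          funext t
          rw [vert_def, vert_def, hk1, Function.update_self, Function.update_of_ne hjm,
            dist_comm]
        rw [hfun, if_pos rfl, if_neg hjm, add_zero]
        have hnepq : pt (r j) (α j) ≠ pt (r (j-1)) (α (j-1)) := by
          have := hne (j-1)
          rw [vert_def, vert_def, hk1] at this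
          exact this.symm
        have h := hasDerivAt_dist_pt (r j) (r (j-1)) (α j) (α (j-1)) hnepq
        convert h using 1
        rw [sgd, vert_def, vert_def, hk1, dist_comm]
        ring
      · have hk1 : k + 1 ≠ j := by
          intro h
          apply hkm
          rw [← h, add_sub_cancel_right]
        have hfun : (fun t => dist (vert r (Function.update α j t) k)
              (vert r (Function.update α j t) (k+1)))
            = fun _ => dist (vert r α k) (vert r α (k+1)) := by
          funext t
          rw [vert_def, vert_def, Function.update_of_ne hk, Function.update_of_ne hk1,
            ← vert_def, ← vert_def]
        rw [hfun, if_neg hkm, if_neg hk, add_zero]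
        exact hasDerivAt_const _ _
  have hsum := HasDerivAt.fun_sum (fun k (_ : k ∈ Finset.univ) => hterm k)
  have hval : (∑ k : Fin n, ((if k = j - 1 then sgd r α (j-1) else 0)
      + (if k = j then -(sgd r α j) else 0))) = sgd r α (j-1) - sgd r α j := by
    rw [Finset.sum_add_distrib, Finset.sum_ite_eq' Finset.univ (j-1) (fun _ => sgd r α (j-1)),
      Finset.sum_ite_eq' Finset.univ j (fun _ => -(sgd r α j))]
    simp
    ring
  rw [hval] at hsum
  exact hsum

/-- Theorem 1(b): at a stationary connecting cycle with distinct consecutive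
vertices, there is a common circle of some radius `σ ≥ 0` centered at the origin to which
every side line (the line through `p_j` and `p_{j+1}`) is tangent, i.e. all side lines are
at the same distance `σ` from the origin. -/
theorem stmt_3 {n : ℕ} [NeZero n] (hn : 3 ≤ n) (r : Fin n → ℝ) (hr : ∀ i, 0 < r i)
    (α : Fin n → ℝ) (hne : ∀ j, vert r α j ≠ vert r α (j + 1))
    (hcrit : ∀ j, HasDerivAt (fun t => perimE r (Function.update α j t)) 0 (α j)) :
    ∃ σ : ℝ, 0 ≤ σ ∧ ∀ j, Metric.infDist (0 : EuclideanSpace ℝ (Fin 2))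
      (affineSpan ℝ {vert r α j, vert r α (j + 1)} :
        Set (EuclideanSpace ℝ (Fin 2))) = σ := by
  have hstep : ∀ j : Fin n, sgd r α (j - 1) = sgd r α j := by
    intro j
    have h := (hcrit j).unique (hasDerivAt_perim_update hn r α hne j)
    linarith
  have hstep' : ∀ j : Fin n, sgd r α j = sgd r α (j + 1) := by
    intro j
    have := hstep (j + 1)
    rwa [add_sub_cancel_right] at this
  open Fin.NatCast in
  have hconst : ∀ j : Fin n, sgd r α j = sgd r α 0 := by
    have key : ∀ m : ℕ, sgd r α (m : Fin n) = sgd r α 0 := by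
      intro m
      induction m with
      | zero => simp
      | succ m ih =>
        have : ((m + 1 : ℕ) : Fin n) = (m : Fin n) + 1 := by push_cast; ring
        rw [this, ← hstep' (m : Fin n), ih]
    intro j
    have := key j.val
    rwa [Fin.cast_val_eq_self] at this
  refine ⟨|sgd r α 0|, abs_nonneg _, fun j => ?_⟩
  rw [infDist_line _ _ (hne j)]
  have hcross : (vert r α j) 0 * (vert r α (j+1)) 1
      - (vert r α (j+1)) 0 * (vert r α j) 1
      = r j * r (j+1) * Real.sin (α (j+1) - α j) := by
    rw [vert_def, vert_def, pt_zero, pt_one, pt_zero, pt_one, Real.sin_sub]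
    ring
  rw [hcross, ← hconst j, sgd, abs_div, abs_of_pos (dist_pos.2 (hne j))]
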